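/- Restriction to incomplete one-period wealth families: Fix α ∈ (0,1) and let W_feas ⊆ W̄ be any nonempty closed subset. Then sup_{W ∈ W_feas} Q_{n,α}(W) = max over admissible chambers Γ of sup_{W ∈ W_feas ∩ cl(F_Γ)} W^{k_{α,Γ}} (with the convention that the inner supremum over an empty set is ignored in the max). -/

import Mathlib

open Finset Filter Topology
open scoped Classical

noncomputable section

/-- The closed Arrow–Debreu wealth simplex `{W ∈ [0,∞)^m : Σ q_i W_i = 1}`. -/
def closedSimplex {m : ℕ} (q : Fin m → ℝ) : Set (Fin m → ℝ) :=
  {W | (∀ i, 0 ≤ W i) ∧ ∑ i, q i * W i = 1}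

/-- The open Arrow–Debreu wealth simplex `{W ∈ (0,∞)^m : Σ q_i W_i = 1}`. -/
def openSimplex {m : ℕ} (q : Fin m → ℝ) : Set (Fin m → ℝ) :=
  {W | (∀ i, 0 < W i) ∧ ∑ i, q i * W i = 1}

/-- The finite set `C_n` of count vectors `k : Fin m → ℕ` with `Σ k_i = n`. -/
def countFinset (m n : ℕ) : Finset (Fin m → ℕ) :=
  (Fintype.piFinset fun _ : Fin m => Finset.range (n + 1)).filter fun k => ∑ i, k i = n

/-- The monomial `W^k := Π_i W_i^{k_i}` (with the convention `0^0 = 1`). -/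
def mono {m : ℕ} (W : Fin m → ℝ) (k : Fin m → ℕ) : ℝ := ∏ i, W i ^ k i

/-- The multinomial probability `π_k = (n!/(k_1!⋯k_m!))·Π p_i^{k_i}`. -/
def countProb {m : ℕ} (p : Fin m → ℝ) (k : Fin m → ℕ) : ℝ :=
  (Nat.multinomial Finset.univ k : ℝ) * ∏ i, p i ^ k i

/-- The upper α-quantile of terminal wealth
`Q_{n,α}(W) := sup{t ∈ [0,∞) : Σ_{k ∈ C_n : W^k ≥ t} π_k ≥ α}`. -/
def upperQuantile {m : ℕ} (p : Fin m → ℝ) (n : ℕ) (α : ℝ) (W : Fin m → ℝ) : ℝ :=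
  sSup {t : ℝ | 0 ≤ t ∧
    α ≤ ∑ k ∈ countFinset m n, if t ≤ mono W k then countProb p k else 0}

/-- The union of the count hyperplanes `H_{k,ℓ}`. -/
def hyperUnion (m n : ℕ) : Set (Fin m → ℝ) :=
  {u | ∃ k ∈ countFinset m n, ∃ l ∈ countFinset m n,
    k ≠ l ∧ ∑ i, ((k i : ℝ) - (l i : ℝ)) * u i = 0}

/-- A chamber is a connected component of the complement of the count arrangement. -/
def IsChamber (m n : ℕ) (Γ : Set (Fin m → ℝ)) : Prop :=
  ∃ u ∈ (hyperUnion m n)ᶜ, Γ = connectedComponentIn (hyperUnion m n)ᶜ u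

/-- `F_Γ := {W ∈ W⁺⁺ : log W ∈ Γ}`. -/
def chamberFace {m : ℕ} (q : Fin m → ℝ) (Γ : Set (Fin m → ℝ)) : Set (Fin m → ℝ) :=
  {W | W ∈ openSimplex q ∧ (fun i => Real.log (W i)) ∈ Γ}

/-- `k` is the quantile count vector `k_{α,Γ}` of the chamber `Γ`: the tail mass at `W^k`
is at least `α`, while the strict tail mass is below `α`, for every `W ∈ F_Γ`. -/
def IsQuantileVec {m : ℕ} (p q : Fin m → ℝ) (n : ℕ) (α : ℝ) (Γ : Set (Fin m → ℝ))
    (k : Fin m → ℕ) : Prop :=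
  k ∈ countFinset m n ∧
  ∀ W ∈ chamberFace q Γ,
    α ≤ (∑ l ∈ countFinset m n, if mono W k ≤ mono W l then countProb p l else 0) ∧
    (∑ l ∈ countFinset m n, if mono W k < mono W l then countProb p l else 0) < α

section AuxLemmas

-- basic lemmas
lemma countFinset_eq (m n : ℕ) : countFinset m n = Finset.piAntidiag Finset.univ n := by
  ext k
  simp only [countFinset, mem_filter, Fintype.mem_piFinset, mem_range, mem_piAntidiag, mem_univ,
    imp_true_iff, and_true]
  constructor
  · exact fun h => h.2
  · intro h
    refine ⟨fun i => Nat.lt_succ_of_le ?_, h⟩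
    exact h ▸ Finset.single_le_sum (f := k) (fun j _ => Nat.zero_le _) (mem_univ i)

lemma mem_countFinset {m n : ℕ} {k : Fin m → ℕ} : k ∈ countFinset m n ↔ ∑ i, k i = n := by
  rw [countFinset_eq]
  simp [Finset.mem_piAntidiag]

lemma countFinset_nonempty {m : ℕ} (hm : 0 < m) (n : ℕ) : (countFinset m n).Nonempty := by
  refine ⟨fun i => if i = ⟨0, hm⟩ then n else 0, mem_countFinset.2 ?_⟩
  simp [Finset.sum_ite_eq']

lemma countProb_nonneg {m : ℕ} {p : Fin m → ℝ} (hp : ∀ i, 0 ≤ p i) (k : Fin m → ℕ) :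
    0 ≤ countProb p k := by
  refine mul_nonneg (Nat.cast_nonneg _) (Finset.prod_nonneg fun i _ => pow_nonneg (hp i) _)

lemma sum_countProb {m n : ℕ} {p : Fin m → ℝ} (hpsum : ∑ i, p i = 1) :
    ∑ k ∈ countFinset m n, countProb p k = 1 := by
  rw [countFinset_eq]
  have := (Finset.sum_pow_eq_sum_piAntidiag (Finset.univ : Finset (Fin m)) p n).symm
  simp only [countProb]
  rw [this, hpsum, one_pow]

lemma mono_nonneg {m : ℕ} {W : Fin m → ℝ} (hW : ∀ i, 0 ≤ W i) (k : Fin m → ℕ) :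
    0 ≤ mono W k :=
  Finset.prod_nonneg fun i _ => pow_nonneg (hW i) _

lemma mono_pos {m : ℕ} {W : Fin m → ℝ} (hW : ∀ i, 0 < W i) (k : Fin m → ℕ) :
    0 < mono W k :=
  Finset.prod_pos fun i _ => pow_pos (hW i) _

lemma mono_continuous {m : ℕ} (k : Fin m → ℕ) : Continuous fun W : Fin m → ℝ => mono W k := by
  unfold mono
  exact continuous_finset_prod _ fun i _ => (continuous_apply i).pow _

lemma log_mono {m : ℕ} {W : Fin m → ℝ} (hW : ∀ i, 0 < W i) (k : Fin m → ℕ) :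
    Real.log (mono W k) = ∑ i, (k i : ℝ) * Real.log (W i) := by
  unfold mono
  rw [Real.log_prod fun i _ => (pow_pos (hW i) _).ne']
  exact Finset.sum_congr rfl fun i _ => by rw [Real.log_pow]

lemma mono_lt_mono_iff {m : ℕ} {W : Fin m → ℝ} (hW : ∀ i, 0 < W i) (k l : Fin m → ℕ) :
    mono W k < mono W l ↔
      ∑ i, ((k i : ℝ) - (l i : ℝ)) * Real.log (W i) < 0 := by
  rw [← Real.log_lt_log_iff (mono_pos hW k) (mono_pos hW l), log_mono hW, log_mono hW,
    ← sub_neg, ← Finset.sum_sub_distrib]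
  congr! 2 with i
  ring

-- the linear functional of a pair
lemma cfun_continuous {m : ℕ} (k l : Fin m → ℕ) :
    Continuous fun u : Fin m → ℝ => ∑ i, ((k i : ℝ) - (l i : ℝ)) * u i :=
  continuous_finset_sum _ fun i _ => continuous_const.mul (continuous_apply i)

lemma chamber_preconnected {m n : ℕ} {Γ : Set (Fin m → ℝ)} (hΓ : IsChamber m n Γ) :
    IsPreconnected Γ := by
  obtain ⟨u, -, rfl⟩ := hΓ
  exact isPreconnected_connectedComponentIn

lemma chamber_subset {m n : ℕ} {Γ : Set (Fin m → ℝ)} (hΓ : IsChamber m n Γ) :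
    Γ ⊆ (hyperUnion m n)ᶜ := by
  obtain ⟨u, -, rfl⟩ := hΓ
  exact connectedComponentIn_subset _ _

lemma chamber_sign {m n : ℕ} {Γ : Set (Fin m → ℝ)} (hΓ : IsChamber m n Γ)
    {k l : Fin m → ℕ} (hk : k ∈ countFinset m n) (hl : l ∈ countFinset m n) (hkl : k ≠ l)
    {u v : Fin m → ℝ} (hu : u ∈ Γ) (hv : v ∈ Γ)
    (huneg : ∑ i, ((k i : ℝ) - (l i : ℝ)) * u i < 0) :
    ∑ i, ((k i : ℝ) - (l i : ℝ)) * v i < 0 := by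
  set f := fun w : Fin m → ℝ => ∑ i, ((k i : ℝ) - (l i : ℝ)) * w i with hf
  have hne : ∀ w ∈ Γ, f w ≠ 0 := by
    intro w hw h0
    exact (chamber_subset hΓ hw) ⟨k, hk, l, hl, hkl, h0⟩
  by_contra hge
  have hvpos : 0 < f v := lt_of_le_of_ne (not_lt.1 hge) (Ne.symm (hne v hv))
  have h0 : (0:ℝ) ∈ Set.Icc (f u) (f v) := ⟨le_of_lt huneg, le_of_lt hvpos⟩
  obtain ⟨w, hw, hw0⟩ := (chamber_preconnected hΓ).intermediate_value hu hv
    ((cfun_continuous k l).continuousOn) h0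
  exact hne w hw hw0

lemma chamber_mono_lt {m n : ℕ} {q : Fin m → ℝ} {Γ : Set (Fin m → ℝ)} (hΓ : IsChamber m n Γ)
    {k l : Fin m → ℕ} (hk : k ∈ countFinset m n) (hl : l ∈ countFinset m n)
    {W1 W2 : Fin m → ℝ} (h1 : W1 ∈ chamberFace q Γ) (h2 : W2 ∈ chamberFace q Γ)
    (hlt : mono W1 k < mono W1 l) : mono W2 k < mono W2 l := by
  have hkl : k ≠ l := by rintro rfl; exact lt_irrefl _ hlt
  have h1' := (mono_lt_mono_iff h1.1.1 k l).1 hlt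
  exact (mono_lt_mono_iff h2.1.1 k l).2
    (chamber_sign hΓ hk hl hkl h1.2 h2.2 h1')

lemma chamber_mono_le {m n : ℕ} {q : Fin m → ℝ} {Γ : Set (Fin m → ℝ)} (hΓ : IsChamber m n Γ)
    {k l : Fin m → ℕ} (hk : k ∈ countFinset m n) (hl : l ∈ countFinset m n)
    {W1 W2 : Fin m → ℝ} (h1 : W1 ∈ chamberFace q Γ) (h2 : W2 ∈ chamberFace q Γ)
    (hle : mono W1 k ≤ mono W1 l) : mono W2 k ≤ mono W2 l := by
  by_contra hgt
  exact absurd (chamber_mono_lt hΓ hl hk h2 h1 (not_le.1 hgt)) (not_lt.2 hle)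

lemma closure_mono_lt {m n : ℕ} {q : Fin m → ℝ} {Γ : Set (Fin m → ℝ)} (hΓ : IsChamber m n Γ)
    {k l : Fin m → ℕ} (hk : k ∈ countFinset m n) (hl : l ∈ countFinset m n)
    {W : Fin m → ℝ} (hW : W ∈ closure (chamberFace q Γ)) (hlt : mono W k < mono W l)
    {W' : Fin m → ℝ} (h' : W' ∈ chamberFace q Γ) : mono W' k < mono W' l := by
  have hcont : Continuous fun V : Fin m → ℝ => mono V l - mono V k :=
    (mono_continuous l).sub (mono_continuous k)
  have hU : IsOpen {V : Fin m → ℝ | 0 < mono V l - mono V k} :=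
    isOpen_lt continuous_const hcont
  have hWU : W ∈ {V : Fin m → ℝ | 0 < mono V l - mono V k} := by
    simpa using sub_pos.2 hlt
  obtain ⟨W0, hW0U, hW0F⟩ := _root_.mem_closure_iff.1 hW _ hU hWU
  have h0 : mono W0 k < mono W0 l := sub_pos.1 hW0U
  exact chamber_mono_lt hΓ hk hl hW0F h' h0

lemma exists_quantileVec {m n : ℕ} {p q : Fin m → ℝ} {α : ℝ} (hm : 0 < m)
    (hp : ∀ i, 0 ≤ p i) (hpsum : ∑ i, p i = 1) (hα : 0 < α ∧ α < 1)
    {Γ : Set (Fin m → ℝ)} (hΓ : IsChamber m n Γ) (hne : (chamberFace q Γ).Nonempty) :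
    ∃ k, IsQuantileVec p q n α Γ k := by
  classical
  obtain ⟨W0, hW0⟩ := hne
  set C := countFinset m n with hC
  set Tge : (Fin m → ℕ) → ℝ :=
    fun k => ∑ l ∈ C, if mono W0 k ≤ mono W0 l then countProb p l else 0 with hTge
  set Tgt : (Fin m → ℕ) → ℝ :=
    fun k => ∑ l ∈ C, if mono W0 k < mono W0 l then countProb p l else 0 with hTgt
  set T : Finset (Fin m → ℕ) := C.filter fun k => α ≤ Tge k with hT
  -- T is nonempty
  obtain ⟨kmin, hkminC, hkminmin⟩ :=
    Finset.exists_min_image C (fun k => mono W0 k) (countFinset_nonempty hm n)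
  have hTne : T.Nonempty := by
    refine ⟨kmin, Finset.mem_filter.2 ⟨hkminC, ?_⟩⟩
    have : Tge kmin = ∑ l ∈ C, countProb p l := by
      refine Finset.sum_congr rfl fun l hl => ?_
      rw [if_pos (hkminmin l hl)]
    rw [this, sum_countProb hpsum]
    exact hα.2.le
  -- maximal element of T
  obtain ⟨k, hkT, hkmax⟩ := Finset.exists_max_image T (fun k => mono W0 k) hTne
  have hkC : k ∈ C := (Finset.mem_filter.1 hkT).1
  have hkge : α ≤ Tge k := (Finset.mem_filter.1 hkT).2
  -- strict tail is < α
  have hkgt : Tgt k < α := by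
    by_contra hcon
    have hcon' : α ≤ Tgt k := not_lt.1 hcon
    set U : Finset (Fin m → ℕ) := C.filter fun l => mono W0 k < mono W0 l with hU
    rcases U.eq_empty_or_nonempty with hUe | hUne
    · have : Tgt k = 0 := by
        refine Finset.sum_eq_zero fun l hl => ?_
        rw [if_neg]
        intro hlt
        exact (Finset.notMem_empty l) (hUe ▸ Finset.mem_filter.2 ⟨hl, hlt⟩)
      rw [this] at hcon'
      exact absurd hcon' (not_le.2 hα.1)
    · obtain ⟨ls, hlsU, hlsmin⟩ := Finset.exists_min_image U (fun l => mono W0 l) hUne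
      have hlsC : ls ∈ C := (Finset.mem_filter.1 hlsU).1
      have hlsgt : mono W0 k < mono W0 ls := (Finset.mem_filter.1 hlsU).2
      have heq : Tge ls = Tgt k := by
        refine Finset.sum_congr rfl fun l hl => ?_
        congr 1
        apply propext
        constructor
        · intro h; exact lt_of_lt_of_le hlsgt h
        · intro h; exact hlsmin l (Finset.mem_filter.2 ⟨hl, h⟩)
      have hlsT : ls ∈ T := Finset.mem_filter.2 ⟨hlsC, by rw [heq]; exact hcon'⟩
      exact absurd (hkmax ls hlsT) (not_le.2 hlsgt)
  -- transfer to all W in the face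
  refine ⟨k, hkC, fun W hW => ?_⟩
  constructor
  · have : (∑ l ∈ C, if mono W k ≤ mono W l then countProb p l else 0) = Tge k := by
      refine Finset.sum_congr rfl fun l hl => ?_
      congr 1
      apply propext
      constructor
      · intro h; exact chamber_mono_le hΓ hkC hl hW hW0 h
      · intro h; exact chamber_mono_le hΓ hkC hl hW0 hW h
    rw [this]; exact hkge
  · have : (∑ l ∈ C, if mono W k < mono W l then countProb p l else 0) = Tgt k := by
      refine Finset.sum_congr rfl fun l hl => ?_
      congr 1
      apply propext
      constructor
      · intro h; exact chamber_mono_lt hΓ hkC hl hW hW0 h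
      · intro h; exact chamber_mono_lt hΓ hkC hl hW0 hW h
    rw [this]; exact hkgt

-- upper bound for the monomials on the closed simplex
def Cbound {m : ℕ} (q : Fin m → ℝ) (n : ℕ) : ℝ := (∏ i, max 1 (q i)⁻¹) ^ n

lemma one_le_Cbound {m : ℕ} (q : Fin m → ℝ) (n : ℕ) : 1 ≤ Cbound q n :=
  by
  have h1 : ∏ i : Fin m, (1:ℝ) ≤ ∏ i, max 1 (q i)⁻¹ :=
    Finset.prod_le_prod (fun _ _ => zero_le_one) (fun i _ => le_max_left _ _)
  simp only [Finset.prod_const_one] at h1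
  exact one_le_pow₀ h1

lemma mono_le_Cbound {m n : ℕ} {q W : Fin m → ℝ} (hq : ∀ i, 0 < q i)
    (hW : W ∈ closedSimplex q) {k : Fin m → ℕ} (hk : k ∈ countFinset m n) :
    mono W k ≤ Cbound q n := by
  have hki : ∀ i, k i ≤ n := by
    intro i
    have := Finset.single_le_sum (f := k) (fun j _ => Nat.zero_le _) (Finset.mem_univ i)
    have hsum : ∑ j, k j = n := by
      have := (Finset.mem_filter.1 hk).2
      exact this
    omega
  have hWle : ∀ i, W i ≤ max 1 (q i)⁻¹ := by
    intro i
    have h1 : q i * W i ≤ 1 := by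
      have : ∀ j ∈ Finset.univ, 0 ≤ q j * W j := fun j _ =>
        mul_nonneg (hq j).le (hW.1 j)
      calc q i * W i ≤ ∑ j, q j * W j :=
            Finset.single_le_sum this (Finset.mem_univ i)
        _ = 1 := hW.2
    have : W i ≤ (q i)⁻¹ := by
      rw [mul_comm, ← le_div_iff₀ (hq i)] at h1
      simpa [div_eq_mul_inv] using h1
    exact le_trans this (le_max_right _ _)
  calc mono W k = ∏ i, W i ^ k i := rfl
    _ ≤ ∏ i, (max 1 (q i)⁻¹) ^ n := by
        refine Finset.prod_le_prod (fun i _ => pow_nonneg (hW.1 i) _) fun i _ => ?_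
        calc W i ^ k i ≤ (max 1 (q i)⁻¹) ^ k i :=
              pow_le_pow_left₀ (hW.1 i) (hWle i) _
          _ ≤ (max 1 (q i)⁻¹) ^ n :=
              pow_le_pow_right₀ (le_max_left _ _) (hki i)
    _ = Cbound q n := by rw [Cbound, ← Finset.prod_pow]
lemma quantileSet_subset {m n : ℕ} {p q W : Fin m → ℝ} {α : ℝ} (hq : ∀ i, 0 < q i)
    (hα : 0 < α) (hW : W ∈ closedSimplex q) :
    {t : ℝ | 0 ≤ t ∧
      α ≤ ∑ k ∈ countFinset m n, if t ≤ mono W k then countProb p k else 0} ⊆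
      Set.Iic (Cbound q n) := by
  intro t ht
  by_contra hgt
  have hgt' : Cbound q n < t := not_le.1 hgt
  have h0 : (∑ k ∈ countFinset m n, if t ≤ mono W k then countProb p k else 0) = 0 := by
    refine Finset.sum_eq_zero fun k hk => ?_
    rw [if_neg]
    exact not_le.2 (lt_of_le_of_lt (mono_le_Cbound hq hW hk) hgt')
  have := ht.2
  rw [h0] at this
  exact absurd this (not_le.2 hα)

lemma quantileSet_bddAbove {m n : ℕ} {p q W : Fin m → ℝ} {α : ℝ} (hq : ∀ i, 0 < q i)
    (hα : 0 < α) (hW : W ∈ closedSimplex q) :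
    BddAbove {t : ℝ | 0 ≤ t ∧
      α ≤ ∑ k ∈ countFinset m n, if t ≤ mono W k then countProb p k else 0} :=
  ⟨Cbound q n, fun t ht => quantileSet_subset hq hα hW ht⟩

lemma upperQuantile_le_Cbound {m n : ℕ} {p q W : Fin m → ℝ} {α : ℝ} (hq : ∀ i, 0 < q i)
    (hα : 0 < α) (hW : W ∈ closedSimplex q) :
    upperQuantile p n α W ≤ Cbound q n :=
  Real.sSup_le (fun t ht => quantileSet_subset hq hα hW ht)
    (le_trans zero_le_one (one_le_Cbound q n))

lemma upperQuantile_nonneg {m n : ℕ} {p q W : Fin m → ℝ} {α : ℝ} (hq : ∀ i, 0 < q i)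
    (hp : ∀ i, 0 ≤ p i) (hpsum : ∑ i, p i = 1) (hα : 0 < α ∧ α < 1)
    (hW : W ∈ closedSimplex q) : 0 ≤ upperQuantile p n α W := by
  refine le_csSup (quantileSet_bddAbove hq hα.1 hW) ?_
  refine ⟨le_refl 0, ?_⟩
  have : (∑ k ∈ countFinset m n, if (0:ℝ) ≤ mono W k then countProb p k else 0)
      = ∑ k ∈ countFinset m n, countProb p k := by
    refine Finset.sum_congr rfl fun k hk => ?_
    rw [if_pos (mono_nonneg hW.1 k)]
  rw [this, sum_countProb hpsum]
  exact hα.2.le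

lemma quantile_eq_mono {m n : ℕ} {p q : Fin m → ℝ} {α : ℝ} (hq : ∀ i, 0 < q i)
    (hp : ∀ i, 0 ≤ p i) (hα : 0 < α ∧ α < 1)
    {Γ : Set (Fin m → ℝ)} (hΓ : IsChamber m n Γ) {k : Fin m → ℕ}
    (hqv : IsQuantileVec p q n α Γ k) {W : Fin m → ℝ} (hW : W ∈ closedSimplex q)
    (hWc : W ∈ closure (chamberFace q Γ)) :
    upperQuantile p n α W = mono W k := by
  obtain ⟨W0, hW0⟩ : (chamberFace q Γ).Nonempty := by
    rcases Set.eq_empty_or_nonempty (chamberFace q Γ) with he | h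
    · rw [he, closure_empty] at hWc; exact absurd hWc (Set.notMem_empty W)
    · exact h
  obtain ⟨hkC, hqv2⟩ := hqv
  obtain ⟨hge0, hgt0⟩ := hqv2 W0 hW0
  apply le_antisymm
  · -- upperQuantile ≤ mono W k
    refine Real.sSup_le (fun t ht => ?_) (mono_nonneg hW.1 k)
    obtain ⟨ht0, htα⟩ := ht
    by_contra hcon
    have hmt : mono W k < t := not_le.1 hcon
    have hle : (∑ l ∈ countFinset m n, if t ≤ mono W l then countProb p l else 0) ≤
        ∑ l ∈ countFinset m n, if mono W0 k < mono W0 l then countProb p l else 0 := by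
      refine Finset.sum_le_sum fun l hl => ?_
      by_cases hc : t ≤ mono W l
      · rw [if_pos hc, if_pos]
        exact closure_mono_lt hΓ hkC hl hWc (lt_of_lt_of_le hmt hc) hW0
      · rw [if_neg hc]
        split
        · exact countProb_nonneg hp l
        · exact le_refl 0
    exact absurd (le_trans htα hle) (not_le.2 hgt0)
  · -- mono W k ≤ upperQuantile
    refine le_csSup (quantileSet_bddAbove hq hα.1 hW) ?_
    refine ⟨mono_nonneg hW.1 k, ?_⟩
    have hle : (∑ l ∈ countFinset m n, if mono W0 k ≤ mono W0 l then countProb p l else 0) ≤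
        ∑ l ∈ countFinset m n, if mono W k ≤ mono W l then countProb p l else 0 := by
      refine Finset.sum_le_sum fun l hl => ?_
      by_cases hc : mono W0 k ≤ mono W0 l
      · rw [if_pos hc, if_pos]
        by_contra hcc
        have : mono W l < mono W k := not_le.1 hcc
        exact absurd (closure_mono_lt hΓ hl hkC hWc this hW0) (not_lt.2 hc)
      · rw [if_neg hc]
        split
        · exact countProb_nonneg hp l
        · exact le_refl 0
    exact le_trans hge0 hle

lemma exists_generic_b (m n : ℕ) :
    ∃ b : Fin m → ℝ, ∀ k ∈ countFinset m n, ∀ l ∈ countFinset m n, k ≠ l →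
      ∑ i, ((k i : ℝ) - (l i : ℝ)) * b i ≠ 0 := by
  classical
  set C := countFinset m n
  set P : (Fin m → ℕ) → (Fin m → ℕ) → Polynomial ℝ :=
    fun k l => ∑ i : Fin m, Polynomial.monomial (i : ℕ) ((k i : ℝ) - (l i : ℝ)) with hP
  have hPcoeff : ∀ k l (j : Fin m), (P k l).coeff (j : ℕ) = (k j : ℝ) - (l j : ℝ) := by
    intro k l j
    rw [hP]
    rw [Polynomial.finset_sum_coeff]
    rw [Finset.sum_eq_single_of_mem j (Finset.mem_univ j)]
    · rw [Polynomial.coeff_monomial, if_pos rfl]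
    · intro i _ hij
      rw [Polynomial.coeff_monomial, if_neg (by simpa [Fin.val_eq_val] using hij)]
  have hPne : ∀ k l : Fin m → ℕ, k ≠ l → P k l ≠ 0 := by
    intro k l hkl h0
    obtain ⟨j, hj⟩ := Function.ne_iff.1 hkl
    have := hPcoeff k l j
    rw [h0, Polynomial.coeff_zero] at this
    have : (k j : ℝ) = (l j : ℝ) := by linarith [this.symm]
    exact hj (Nat.cast_injective this)
  set B : Set ℝ := ⋃ kl ∈ ((C ×ˢ C).filter fun kl => kl.1 ≠ kl.2),
    {x : ℝ | (P kl.1 kl.2).IsRoot x} with hB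
  have hBfin : B.Finite := by
    refine Set.Finite.biUnion (Finset.finite_toSet _) fun kl hkl => ?_
    simp only [Finset.coe_filter, Set.mem_setOf_eq] at hkl
    exact Polynomial.finite_setOf_isRoot (hPne _ _ hkl.2)
  obtain ⟨x, hx⟩ := hBfin.infinite_compl.nonempty
  refine ⟨fun i => x ^ (i : ℕ), fun k hk l hl hkl h0 => ?_⟩
  apply hx
  have hmem : (k, l) ∈ (C ×ˢ C).filter fun kl => kl.1 ≠ kl.2 :=
    Finset.mem_filter.2 ⟨Finset.mem_product.2 ⟨hk, hl⟩, hkl⟩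
  refine Set.mem_biUnion (Finset.mem_coe.2 hmem) ?_
  show (P k l).IsRoot x
  rw [Polynomial.IsRoot, hP]
  rw [Polynomial.eval_finset_sum]
  simp only [Polynomial.eval_monomial]
  exact h0

lemma pair_eventually_ne {m : ℕ} (W b c : Fin m → ℝ) (hW : ∀ i, 0 ≤ W i)
    (hB : ∑ i, c i * b i ≠ 0) :
    ∀ᶠ t in 𝓝[>] (0:ℝ),
      (∑ i, c i * Real.log (W i + t ^ 2)) + t * (∑ i, c i * b i) ≠ 0 := by
  classical
  set B := ∑ i, c i * b i with hBdef
  set S1 : Finset (Fin m) := Finset.univ.filter fun i => W i ≠ 0 with hS1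
  set A : ℝ := ∑ i ∈ Finset.univ.filter fun i => W i = 0, c i with hA
  set Cf : ℝ → ℝ := fun t => ∑ i ∈ S1, c i * Real.log (W i + t ^ 2) with hCf
  set C0 : ℝ := ∑ i ∈ S1, c i * Real.log (W i) with hC0def
  have hWpos : ∀ i ∈ S1, 0 < W i := fun i hi =>
    lt_of_le_of_ne (hW i) (Ne.symm (Finset.mem_filter.1 hi).2)
  -- split the sum
  have hsplit : ∀ t : ℝ, (∑ i, c i * Real.log (W i + t ^ 2))
      = A * Real.log (t ^ 2) + Cf t := by
    intro t
    rw [← Finset.sum_filter_add_sum_filter_not Finset.univ (fun i => W i = 0)]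
    congr 1
    rw [hA, Finset.sum_mul]
    refine Finset.sum_congr rfl fun i hi => ?_
    rw [(Finset.mem_filter.1 hi).2, zero_add]
  -- continuity of Cf at 0
  have hCterm : ∀ i ∈ S1, Tendsto (fun t : ℝ => c i * Real.log (W i + t ^ 2)) (𝓝 0)
      (𝓝 (c i * Real.log (W i))) := by
    intro i hi
    have h1 : ContinuousAt (fun t : ℝ => W i + t ^ 2) 0 :=
      (continuous_const.add (continuous_pow 2)).continuousAt
    have h2 : ContinuousAt Real.log (W i + (0:ℝ) ^ 2) :=
      Real.continuousAt_log (by simpa using (hWpos i hi).ne')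
    have h3 : ContinuousAt (fun t : ℝ => Real.log (W i + t ^ 2)) 0 :=
      ContinuousAt.comp (f := fun t : ℝ => W i + t ^ 2) (g := Real.log) h2 h1
    have h4 := h3.const_mul (c i)
    simpa using h4.tendsto
  have hCtend : Tendsto Cf (𝓝 0) (𝓝 C0) := by
    rw [hCf, hC0def]
    exact tendsto_finset_sum _ hCterm
  -- reduce to the combined expression
  have key : ∀ᶠ t in 𝓝[>] (0:ℝ), A * Real.log (t ^ 2) + (Cf t + t * B) ≠ 0 := by
    rcases eq_or_ne A 0 with hA0 | hA0
    · simp only [hA0, zero_mul, zero_add]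
      rcases eq_or_ne C0 0 with hC00 | hC00
      · -- slope case: (Cf t + t*B)/t → B ≠ 0
        have hCd : HasDerivAt Cf 0 0 := by
          have h0 : ∀ i ∈ S1, HasDerivAt (fun t : ℝ => c i * Real.log (W i + t ^ 2)) 0 0 := by
            intro i hi
            have h1 : HasDerivAt (fun t : ℝ => W i + t ^ 2) ((2:ℕ) * (0:ℝ) ^ (2-1)) 0 :=
              (hasDerivAt_pow 2 (0:ℝ)).const_add (W i)
            have h1' : HasDerivAt (fun t : ℝ => W i + t ^ 2) 0 0 := by
              convert h1 using 1; norm_num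
            have h2 := h1'.log (by simpa using (hWpos i hi).ne')
            have h3 := h2.const_mul (c i)
            simpa using h3
          have := HasDerivAt.fun_sum h0
          simpa [hCf] using this
        have hCf0 : Cf 0 = 0 := by
          have hCfC0 : Cf 0 = C0 := by rw [hCf, hC0def]; simp
          rw [hCfC0, hC00]
        have hslope := hasDerivAt_iff_tendsto_slope.1 hCd
        have hslope' : Tendsto (fun t : ℝ => Cf t / t) (𝓝[≠] (0:ℝ)) (𝓝 0) := by
          rw [slope_fun_def_field, hCf0] at hslope
          simpa using hslope
        have hslope'' : Tendsto (fun t : ℝ => Cf t / t) (𝓝[>] (0:ℝ)) (𝓝 0) :=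
          hslope'.mono_left (nhdsWithin_mono 0 fun t ht => ne_of_gt ht)
        have hBlim : Tendsto (fun t : ℝ => Cf t / t + B) (𝓝[>] (0:ℝ)) (𝓝 B) := by
          have := hslope''.add_const B
          simpa using this
        have hev := hBlim.eventually_ne hB
        filter_upwards [hev, self_mem_nhdsWithin] with t ht htpos
        intro h0
        apply ht
        have htne : (t:ℝ) ≠ 0 := ne_of_gt htpos
        field_simp
        have : Cf t + B * t = Cf t + t * B := by ring
        rw [h0, mul_zero]
      · -- limit C0 ≠ 0
        have hlim : Tendsto (fun t : ℝ => Cf t + t * B) (𝓝[>] (0:ℝ)) (𝓝 C0) := by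
          have h1 : Tendsto (fun t : ℝ => Cf t + t * B) (𝓝 0) (𝓝 (C0 + 0 * B)) :=
            hCtend.add (tendsto_id.mul_const B)
          simp only [zero_mul, add_zero] at h1
          exact h1.mono_left nhdsWithin_le_nhds
        exact hlim.eventually_ne hC00
    · -- A ≠ 0 : dominant log term
      have hlogsq : Tendsto (fun t : ℝ => Real.log (t ^ 2)) (𝓝[>] (0:ℝ)) atBot := by
        have heq : (fun t : ℝ => Real.log (t ^ 2)) = fun t : ℝ => (2:ℝ) * Real.log t := by
          funext t; rw [Real.log_pow]; norm_num
        rw [heq]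
        exact Real.tendsto_log_nhdsGT_zero.const_mul_atBot two_pos
      have hDlim : Tendsto (fun t : ℝ => Cf t + t * B) (𝓝[>] (0:ℝ)) (𝓝 C0) := by
        have h1 : Tendsto (fun t : ℝ => Cf t + t * B) (𝓝 0) (𝓝 (C0 + 0 * B)) :=
          hCtend.add (tendsto_id.mul_const B)
        simp only [zero_mul, add_zero] at h1
        exact h1.mono_left nhdsWithin_le_nhds
      rcases lt_or_gt_of_ne hA0 with hAneg | hApos
      · -- A < 0 : expression → atTop
        have h1 : Tendsto (fun t : ℝ => A * Real.log (t ^ 2)) (𝓝[>] (0:ℝ)) atTop :=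
          hlogsq.const_mul_atBot_of_neg hAneg
        have h2 : Tendsto (fun t : ℝ => A * Real.log (t ^ 2) + (Cf t + t * B))
            (𝓝[>] (0:ℝ)) atTop :=
          tendsto_atTop_add_right_of_le' _ (C0 - 1) h1
            (hDlim.eventually (eventually_ge_nhds (by linarith)))
        exact (h2.eventually_gt_atTop 0).mono fun t ht => ne_of_gt ht
      · -- A > 0 : expression → atBot
        have h1 : Tendsto (fun t : ℝ => A * Real.log (t ^ 2)) (𝓝[>] (0:ℝ)) atBot :=
          hlogsq.const_mul_atBot hApos
        have h2 : Tendsto (fun t : ℝ => A * Real.log (t ^ 2) + (Cf t + t * B))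
            (𝓝[>] (0:ℝ)) atBot :=
          tendsto_atBot_add_right_of_ge' _ (C0 + 1) h1
            (hDlim.eventually (eventually_le_nhds (by linarith)))
        exact (h2.eventually_lt_atBot 0).mono fun t ht => ne_of_lt ht
  filter_upwards [key] with t ht
  rw [hsplit t]
  intro h0
  exact ht (by linarith)

lemma exists_chamber_closure {m n : ℕ} {q : Fin m → ℝ} (hm : 0 < m) (hq : ∀ i, 0 < q i)
    {W : Fin m → ℝ} (hW : W ∈ closedSimplex q) :
    ∃ Γ : Set (Fin m → ℝ), IsChamber m n Γ ∧ (chamberFace q Γ).Nonempty ∧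
      W ∈ closure (chamberFace q Γ) := by
  classical
  have : Nonempty (Fin m) := Fin.pos_iff_nonempty.1 hm
  have hmne : (Finset.univ : Finset (Fin m)).Nonempty := Finset.univ_nonempty
  obtain ⟨b, hb⟩ := exists_generic_b m n
  set Y : ℝ → Fin m → ℝ := fun t i => (W i + t ^ 2) * Real.exp (t * b i) with hY
  set N : ℝ → ℝ := fun t => ∑ j, q j * Y t j with hN
  set Wt : ℝ → Fin m → ℝ := fun t i => Y t i / N t with hWt
  have hYpos : ∀ t : ℝ, t ≠ 0 → ∀ i, 0 < Y t i := by
    intro t ht i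
    exact mul_pos (add_pos_of_nonneg_of_pos (hW.1 i) (pow_two_pos_of_ne_zero ht))
      (Real.exp_pos _)
  have hNpos : ∀ t : ℝ, t ≠ 0 → 0 < N t :=
    fun t ht => Finset.sum_pos (fun j _ => mul_pos (hq j) (hYpos t ht j)) hmne
  have hWtpos : ∀ t : ℝ, t ≠ 0 → ∀ i, 0 < Wt t i :=
    fun t ht i => div_pos (hYpos t ht i) (hNpos t ht)
  have hWtsimplex : ∀ t : ℝ, t ≠ 0 → Wt t ∈ openSimplex q := by
    intro t ht
    refine ⟨hWtpos t ht, ?_⟩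
    have h1 : ∑ i, q i * Wt t i = (∑ i, q i * Y t i) / N t := by
      rw [Finset.sum_div]
      exact Finset.sum_congr rfl fun i _ => (mul_div_assoc _ _ _).symm
    rw [h1, div_self (hNpos t ht).ne']
  -- the log functional identity
  have hsumc : ∀ k ∈ countFinset m n, ∀ l ∈ countFinset m n,
      ∑ i, ((k i : ℝ) - (l i : ℝ)) = 0 := by
    intro k hk l hl
    rw [Finset.sum_sub_distrib]
    have h1 : ∑ i, ((k i : ℝ)) = (n : ℝ) := by
      rw [← Nat.cast_sum, mem_countFinset.1 hk]
    have h2 : ∑ i, ((l i : ℝ)) = (n : ℝ) := by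
      rw [← Nat.cast_sum, mem_countFinset.1 hl]
    rw [h1, h2, sub_self]
  have hlogid : ∀ t : ℝ, t ≠ 0 → ∀ k ∈ countFinset m n, ∀ l ∈ countFinset m n,
      ∑ i, ((k i : ℝ) - (l i : ℝ)) * Real.log (Wt t i)
        = (∑ i, ((k i : ℝ) - (l i : ℝ)) * Real.log (W i + t ^ 2))
          + t * ∑ i, ((k i : ℝ) - (l i : ℝ)) * b i := by
    intro t ht k hk l hl
    have hlogW : ∀ i, Real.log (Wt t i)
        = Real.log (W i + t ^ 2) + t * b i - Real.log (N t) := by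
      intro i
      rw [hWt]
      simp only
      rw [Real.log_div (hYpos t ht i).ne' (hNpos t ht).ne', hY]
      simp only
      rw [Real.log_mul (add_pos_of_nonneg_of_pos (hW.1 i) (pow_two_pos_of_ne_zero ht)).ne'
        (Real.exp_pos _).ne', Real.log_exp]
    calc ∑ i, ((k i : ℝ) - (l i : ℝ)) * Real.log (Wt t i)
        = ∑ i, (((k i : ℝ) - (l i : ℝ)) * (Real.log (W i + t ^ 2) + t * b i)
            - ((k i : ℝ) - (l i : ℝ)) * Real.log (N t)) := by
          refine Finset.sum_congr rfl fun i _ => ?_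
          rw [hlogW i]; ring
      _ = (∑ i, ((k i : ℝ) - (l i : ℝ)) * (Real.log (W i + t ^ 2) + t * b i))
            - (∑ i, ((k i : ℝ) - (l i : ℝ))) * Real.log (N t) := by
          rw [Finset.sum_sub_distrib, Finset.sum_mul]
      _ = ∑ i, ((k i : ℝ) - (l i : ℝ)) * (Real.log (W i + t ^ 2) + t * b i) := by
          rw [hsumc k hk l hl, zero_mul, sub_zero]
      _ = (∑ i, ((k i : ℝ) - (l i : ℝ)) * Real.log (W i + t ^ 2))
            + t * ∑ i, ((k i : ℝ) - (l i : ℝ)) * b i := by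
          rw [Finset.mul_sum, ← Finset.sum_add_distrib]
          refine Finset.sum_congr rfl fun i _ => ?_
          ring
  -- eventually all pair functionals are nonzero
  have hev : ∀ᶠ t in 𝓝[>] (0:ℝ), ∀ kl ∈ (countFinset m n) ×ˢ (countFinset m n),
      kl.1 ≠ kl.2 →
      (∑ i, ((kl.1 i : ℝ) - (kl.2 i : ℝ)) * Real.log (W i + t ^ 2))
        + t * ∑ i, ((kl.1 i : ℝ) - (kl.2 i : ℝ)) * b i ≠ 0 := by
    rw [Filter.eventually_all_finset]
    intro kl hkl
    rcases eq_or_ne kl.1 kl.2 with he | hne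
    · exact Filter.Eventually.of_forall fun t h => absurd he h
    · have hk := (Finset.mem_product.1 hkl).1
      have hl := (Finset.mem_product.1 hkl).2
      have hB := hb kl.1 hk kl.2 hl hne
      exact (pair_eventually_ne W b (fun i => (kl.1 i : ℝ) - (kl.2 i : ℝ)) hW.1 hB).mono
        fun t ht _ => ht
  obtain ⟨ε, hε, hIoo⟩ := mem_nhdsGT_iff_exists_Ioo_subset.1 hev
  have hεpos : 0 < ε := hε
  -- points on the path avoid the arrangement
  have hpath : ∀ t ∈ Set.Ioo (0:ℝ) ε, (fun i => Real.log (Wt t i)) ∈ (hyperUnion m n)ᶜ := by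
    intro t ht
    intro hmem
    obtain ⟨k, hk, l, hl, hkl, h0⟩ := hmem
    have hfun := hIoo ht (k, l) (Finset.mem_product.2 ⟨hk, hl⟩) hkl
    apply hfun
    rw [← hlogid t (ne_of_gt ht.1) k hk l hl]
    exact h0
  -- continuity of the building blocks
  have hYcont : ∀ i, Continuous fun t : ℝ => Y t i := by
    intro i
    exact (continuous_const.add (continuous_pow 2)).mul
      (Real.continuous_exp.comp (continuous_id.mul continuous_const))
  have hNcont : Continuous N := continuous_finset_sum _ fun j _ => continuous_const.mul (hYcont j)
  have hφcont : ContinuousOn (fun t => fun i => Real.log (Wt t i)) (Set.Ioo (0:ℝ) ε) := by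
    intro t ht
    apply ContinuousAt.continuousWithinAt
    apply continuousAt_pi.2
    intro i
    have htne : t ≠ 0 := ne_of_gt ht.1
    have h1 : ContinuousAt (fun s : ℝ => Wt s i) t :=
      ((hYcont i).continuousAt).div (hNcont.continuousAt) (hNpos t htne).ne'
    exact ContinuousAt.comp (f := fun s : ℝ => Wt s i) (g := Real.log)
      (Real.continuousAt_log (hWtpos t htne i).ne') h1
  -- the chamber
  set t0 : ℝ := ε / 2 with ht0def
  have ht0 : t0 ∈ Set.Ioo (0:ℝ) ε := ⟨by positivity, by linarith⟩
  set u0 : Fin m → ℝ := fun i => Real.log (Wt t0 i) with hu0def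
  have hu0 : u0 ∈ (hyperUnion m n)ᶜ := hpath t0 ht0
  refine ⟨connectedComponentIn (hyperUnion m n)ᶜ u0, ⟨u0, hu0, rfl⟩, ?_, ?_⟩
  all_goals
    have himg : (fun t => fun i => Real.log (Wt t i)) '' (Set.Ioo (0:ℝ) ε)
        ⊆ connectedComponentIn (hyperUnion m n)ᶜ u0 := by
      refine IsPreconnected.subset_connectedComponentIn
        ((isPreconnected_Ioo).image _ hφcont) ⟨t0, ht0, rfl⟩ ?_
      rintro _ ⟨t, ht, rfl⟩
      exact hpath t ht
  · -- nonempty face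
    exact ⟨Wt t0, hWtsimplex t0 (ne_of_gt ht0.1), himg ⟨t0, ht0, rfl⟩⟩
  · -- closure membership
    have hface : ∀ t ∈ Set.Ioo (0:ℝ) ε,
        Wt t ∈ chamberFace q (connectedComponentIn (hyperUnion m n)ᶜ u0) :=
      fun t ht => ⟨hWtsimplex t (ne_of_gt ht.1), himg ⟨t, ht, rfl⟩⟩
    have hten : Tendsto (fun t => Wt t) (𝓝[>] (0:ℝ)) (𝓝 W) := by
      rw [tendsto_pi_nhds]
      intro i
      have hY0 : Y 0 i = W i := by rw [hY]; simp
      have hN0 : N 0 = 1 := by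
        rw [hN]
        simp only [hY]
        have : ∑ j, q j * ((W j + (0:ℝ) ^ 2) * Real.exp (0 * b j)) = ∑ j, q j * W j := by
          refine Finset.sum_congr rfl fun j _ => ?_
          norm_num
        rw [this, hW.2]
      have hYl : Tendsto (fun t => Y t i) (𝓝 (0:ℝ)) (𝓝 (W i)) := by
        have := (hYcont i).tendsto 0
        rwa [hY0] at this
      have hNl : Tendsto N (𝓝 (0:ℝ)) (𝓝 1) := by
        have := hNcont.tendsto 0
        rwa [hN0] at this
      have := hYl.div hNl one_ne_zero
      simp only [div_one] at this
      exact (this.mono_left nhdsWithin_le_nhds)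
    exact mem_closure_of_tendsto hten
      (Filter.eventually_of_mem (Ioo_mem_nhdsGT hεpos) hface)

end AuxLemmas

/-- **Restriction to incomplete one-period wealth families.** For any nonempty closed
feasible family `Wfeas ⊆ W̄`, the supremum of the upper `α`-quantile over `Wfeas`
equals the maximum over admissible chambers `Γ` (with quantile count vector `k_{α,Γ}`,
and nonempty intersection `Wfeas ∩ cl(F_Γ)`) of the supremum of `W^{k_{α,Γ}}` over
`Wfeas ∩ cl(F_Γ)`. -/
theorem restricted_family (m n : ℕ) (hm : 2 ≤ m) (hn : 1 ≤ n)
    (p q : Fin m → ℝ) (hp : ∀ i, 0 < p i ∧ p i < 1) (hpsum : ∑ i, p i = 1)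
    (hq : ∀ i, 0 < q i) (α : ℝ) (hα : 0 < α ∧ α < 1)
    (Wfeas : Set (Fin m → ℝ)) (hsub : Wfeas ⊆ closedSimplex q)
    (hne : Wfeas.Nonempty) (hcl : IsClosed Wfeas) :
    sSup (upperQuantile p n α '' Wfeas) =
      sSup {v : ℝ | ∃ Γ : Set (Fin m → ℝ), ∃ k : Fin m → ℕ,
        IsChamber m n Γ ∧ (chamberFace q Γ).Nonempty ∧ IsQuantileVec p q n α Γ k ∧
        (Wfeas ∩ closure (chamberFace q Γ)).Nonempty ∧
        v = sSup ((fun W => mono W k) '' (Wfeas ∩ closure (chamberFace q Γ)))} := by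
  classical
  have hm1 : 0 < m := lt_of_lt_of_le two_pos hm
  have hp0 : ∀ i, 0 ≤ p i := fun i => (hp i).1.le
  apply le_antisymm
  · refine csSup_le (hne.image _) ?_
    rintro x ⟨W, hWf, rfl⟩
    obtain ⟨Γ, hΓ, hfne, hWc⟩ := exists_chamber_closure (n := n) hm1 hq (hsub hWf)
    obtain ⟨k, hqv⟩ := exists_quantileVec hm1 hp0 hpsum hα hΓ hfne
    have heq := quantile_eq_mono hq hp0 hα hΓ hqv (hsub hWf) hWc
    have hWmem : W ∈ Wfeas ∩ closure (chamberFace q Γ) := ⟨hWf, hWc⟩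
    have hbdd : BddAbove ((fun W => mono W k) '' (Wfeas ∩ closure (chamberFace q Γ))) := by
      refine ⟨Cbound q n, ?_⟩
      rintro _ ⟨W', hW', rfl⟩
      exact mono_le_Cbound hq (hsub hW'.1) hqv.1
    have h1 : upperQuantile p n α W ≤
        sSup ((fun W => mono W k) '' (Wfeas ∩ closure (chamberFace q Γ))) := by
      rw [heq]
      exact le_csSup hbdd ⟨W, hWmem, rfl⟩
    refine le_trans h1 (le_csSup ?_ ?_)
    · refine ⟨Cbound q n, ?_⟩
      rintro v ⟨Γ', k', hΓ', hfne', hqv', hint', rfl⟩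
      refine csSup_le (hint'.image _) ?_
      rintro _ ⟨W', hW', rfl⟩
      exact mono_le_Cbound hq (hsub hW'.1) hqv'.1
    · exact ⟨Γ, k, hΓ, hfne, hqv, ⟨W, hWmem⟩, rfl⟩
  · have hLHS0 : 0 ≤ sSup (upperQuantile p n α '' Wfeas) := by
      obtain ⟨W1, hW1⟩ := hne
      refine le_trans (upperQuantile_nonneg hq hp0 hpsum hα (hsub hW1)) (le_csSup ?_ ⟨W1, hW1, rfl⟩)
      exact ⟨Cbound q n, by
        rintro _ ⟨W', hW', rfl⟩; exact upperQuantile_le_Cbound hq hα.1 (hsub hW')⟩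
    refine Real.sSup_le ?_ hLHS0
    rintro v ⟨Γ, k, hΓ, hfne, hqv, hint, rfl⟩
    refine csSup_le (hint.image _) ?_
    rintro _ ⟨W', hW', rfl⟩
    have heq := quantile_eq_mono hq hp0 hα hΓ hqv (hsub hW'.1) hW'.2
    show mono W' k ≤ _
    rw [← heq]
    refine le_csSup ?_ ⟨W', hW'.1, rfl⟩
    exact ⟨Cbound q n, by
      rintro _ ⟨W'', hW'', rfl⟩; exact upperQuantile_le_Cbound hq hα.1 (hsub hW'')⟩
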